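/- Let m ≥ 2 and 1 ≤ q ≤ m − 1 be integers, and let W ⊆ [m] with 1 ≤ |W| ≤ m − 1. Then the number of q-element subsets T of [m] with |T ∩ W| even is at least C(m − 2, q − 1), and likewise the number of q-element subsets T with |T ∩ W| odd is at least C(m − 2, q − 1). Moreover, m² · C(m − 2, q − 1) ≥ q · C(m, q), so each of these two families contains at least a q/m² fraction of all C(m, q) subsets. -/

import Mathlib

open Finset

/-- Key injection lemma: for `w ∈ W`, `v ∉ W`, any parity-like predicate `p`
(with `¬ p n → p (n+1)`) is achieved by at least `C(m-2, q-1)` many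
`q`-subsets `T` of `Fin m` (value `p ((T ∩ W).card)`). -/
lemma key_inj {m : ℕ} (q : ℕ) (hq : 1 ≤ q) (W : Finset (Fin m)) (w v : Fin m)
    (hwv : w ≠ v) (hw : w ∈ W) (hv : v ∉ W)
    (p : ℕ → Prop) [DecidablePred p]
    (hp : ∀ n, ¬ p n → p (n + 1)) :
    (m - 2).choose (q - 1) ≤
      (Finset.univ.filter
        (fun T : Finset (Fin m) => T.card = q ∧ p ((T ∩ W).card))).card := by
  classical
  set U : Finset (Fin m) := (Finset.univ.erase w).erase v with hU
  have hcardU : U.card = m - 2 := by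
    rw [hU, card_erase_of_mem (by simp [Ne.symm hwv]), card_erase_of_mem (mem_univ w)]
    simp [Finset.card_univ]; omega
  have hcardA : (Finset.powersetCard (q - 1) U).card = (m - 2).choose (q - 1) := by
    rw [Finset.card_powersetCard, hcardU]
  rw [← hcardA]
  apply Finset.card_le_card_of_injOn
    (fun S => if p ((S ∩ W).card) then insert v S else insert w S)
  · intro S hS
    rw [Finset.mem_coe, Finset.mem_powersetCard] at hS
    obtain ⟨hSU, hScard⟩ := hS
    have hvS : v ∉ S := fun h => by simpa [hU] using hSU h
    have hwS : w ∉ S := fun h => by simpa [hU, hwv] using hSU h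
    simp only [Finset.mem_coe, Finset.mem_filter, Finset.mem_univ, true_and]
    by_cases h : p ((S ∩ W).card)
    · rw [if_pos h]
      constructor
      · rw [Finset.card_insert_of_notMem hvS, hScard]; omega
      · rwa [Finset.insert_inter_of_notMem hv]
    · rw [if_neg h]
      constructor
      · rw [Finset.card_insert_of_notMem hwS, hScard]; omega
      · rw [Finset.insert_inter_of_mem hw,
          Finset.card_insert_of_notMem (fun hc => hwS (Finset.mem_inter.mp hc).1)]
        exact hp _ h
  · intro S1 h1 S2 h2 heq
    have recover : ∀ S ∈ Finset.powersetCard (q - 1) U,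
        ((if p ((S ∩ W).card) then insert v S else insert w S).erase v).erase w = S := by
      intro S hS
      rw [Finset.mem_powersetCard] at hS
      have hvS : v ∉ S := fun h => by simpa [hU] using hS.1 h
      have hwS : w ∉ S := fun h => by simpa [hU, hwv] using hS.1 h
      by_cases h : p ((S ∩ W).card)
      · rw [if_pos h, Finset.erase_insert hvS, Finset.erase_eq_of_notMem hwS]
      · rw [if_neg h,
          Finset.erase_eq_of_notMem (by simp [Ne.symm hwv, hvS] : v ∉ insert w S),
          Finset.erase_insert hwS]
    have e1 := recover S1 h1
    have e2 := recover S2 h2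
    dsimp only at heq
    rw [← e1, heq, e2]

theorem many_even_and_odd_intersections (m q : ℕ) (hm : 2 ≤ m)
    (hq1 : 1 ≤ q) (hq2 : q ≤ m - 1)
    (W : Finset (Fin m)) (hW1 : 1 ≤ W.card) (hW2 : W.card ≤ m - 1) :
    (m - 2).choose (q - 1) ≤
        (Finset.univ.filter
          (fun T : Finset (Fin m) => T.card = q ∧ Even ((T ∩ W).card))).card ∧
    (m - 2).choose (q - 1) ≤
        (Finset.univ.filter
          (fun T : Finset (Fin m) => T.card = q ∧ Odd ((T ∩ W).card))).card ∧
    q * m.choose q ≤ m^2 * (m - 2).choose (q - 1) := by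
  classical
  obtain ⟨w, hw⟩ := Finset.card_pos.mp hW1
  have hWne : W ≠ Finset.univ := by
    intro h
    rw [h, Finset.card_univ, Fintype.card_fin] at hW2
    omega
  obtain ⟨v, hv⟩ : ∃ v, v ∉ W := by
    by_contra h
    push_neg at h
    exact hWne (Finset.eq_univ_of_forall h)
  have hwv : w ≠ v := fun h => hv (h ▸ hw)
  refine ⟨?_, ?_, ?_⟩
  · exact key_inj q hq1 W w v hwv hw hv Even
      (fun n h => Nat.even_add_one.mpr h)
  · exact key_inj q hq1 W w v hwv hw hv Odd
      (fun n h => by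
        rw [Nat.odd_add_one]
        exact h)
  · -- arithmetic part
    have h1 : m * (m - 1).choose (q - 1) = m.choose q * q := by
      have := Nat.add_one_mul_choose_eq (m - 1) (q - 1)
      have hm1 : m - 1 + 1 = m := by omega
      have hq1' : q - 1 + 1 = q := by omega
      rwa [hm1, hq1'] at this
    have h2 : (m - 1) * (m - 2).choose (q - 1) = (m - 1).choose q * q := by
      have := Nat.add_one_mul_choose_eq (m - 2) (q - 1)
      have hm2 : m - 2 + 1 = m - 1 := by omega
      have hq1' : q - 1 + 1 = q := by omega
      rwa [hm2, hq1'] at this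
    have h3 : (m - 1).choose q * q = (m - 1).choose (q - 1) * (m - 1 - (q - 1)) := by
      have := Nat.choose_succ_right_eq (m - 1) (q - 1)
      have hq1' : q - 1 + 1 = q := by omega
      rwa [hq1'] at this
    have h4 : (m - 1).choose (q - 1) ≤ (m - 1) * (m - 2).choose (q - 1) := by
      rw [h2, h3]
      have : 1 ≤ m - 1 - (q - 1) := by omega
      calc (m - 1).choose (q - 1) = (m - 1).choose (q - 1) * 1 := (mul_one _).symm
        _ ≤ (m - 1).choose (q - 1) * (m - 1 - (q - 1)) := Nat.mul_le_mul_left _ this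
    calc q * m.choose q = m * (m - 1).choose (q - 1) := by rw [h1, mul_comm]
      _ ≤ m * ((m - 1) * (m - 2).choose (q - 1)) := Nat.mul_le_mul_left _ h4
      _ = (m * (m - 1)) * (m - 2).choose (q - 1) := by ring
      _ ≤ m ^ 2 * (m - 2).choose (q - 1) := by
          apply Nat.mul_le_mul_right
          have : m - 1 ≤ m := Nat.sub_le _ _
          calc m * (m - 1) ≤ m * m := Nat.mul_le_mul_left _ this
            _ = m ^ 2 := (sq m).symm
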